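/- For every g ≥ 4 and t, u ∈ ℕ with u − 1 ≥ (g − 2)(t − 1), every menu selection problem with g public goods has a (t,u)-stable menu. -/

import Mathlib

structure MenuProblem (N G : Type) where
  pref : N → List G
  nodup : ∀ i, (pref i).Nodup

namespace MenuProblem

variable {N G : Type} [Fintype N] [DecidableEq G]

/-- The good assigned to agent `i` when menu `O` is offered:
its favorite ranked good in `O`, if any. -/
def assigned (P : MenuProblem N G) (O : Finset G) (i : N) : Option G :=
  (P.pref i).find? (fun a => decide (a ∈ O))

/-- Number of agents assigned to good `j` when menu `O` is offered. -/
def assignedCount (P : MenuProblem N G) (O : Finset G) (j : G) : ℕ :=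
  (Finset.univ.filter (fun i => P.assigned O i = some j)).card

/-- The lobby for a good `j` against menu `O`: the number of agents that
would take `j` if it were added to the menu. -/
def lobby (P : MenuProblem N G) (O : Finset G) (j : G) : ℕ :=
  P.assignedCount (insert j O) j

/-- `|a ≻ b|`: the number of agents that would take `a` from the menu `{a, b}`. -/
def prefCount (P : MenuProblem N G) (a b : G) : ℕ :=
  P.assignedCount {a, b} a

/-- A menu is `t`-feasible if every offered good is assigned at least `t` agents. -/
def TFeasible (P : MenuProblem N G) (O : Finset G) (t : ℕ) : Prop :=
  ∀ j ∈ O, t ≤ P.assignedCount O j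

/-- A menu is `u`-uncontestable if no unoffered good has a lobby of at least `u` agents. -/
def UUncontestable (P : MenuProblem N G) (O : Finset G) (u : ℕ) : Prop :=
  ∀ j ∉ O, P.lobby O j < u

/-- A menu is `(t,u)`-stable if it is `t`-feasible and `u`-uncontestable. -/
def Stable (P : MenuProblem N G) (O : Finset G) (t u : ℕ) : Prop :=
  P.TFeasible O t ∧ P.UUncontestable O u

end MenuProblem

open Finset

section Auxiliary

variable {G : Type} [DecidableEq G]

/-- If an agent's favourite good in a larger menu lies in a smaller menu,
it is also its favourite good in the smaller menu. -/
lemma MenuSel.find?_mono {A B : Finset G} (hAB : A ⊆ B) {x : G} (hx : x ∈ A) :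
    ∀ l : List G, l.find? (fun a => decide (a ∈ B)) = some x →
      l.find? (fun a => decide (a ∈ A)) = some x := by
  intro l
  induction l with
  | nil => simp
  | cons h tl ih =>
    intro hf
    by_cases hB : h ∈ B
    · rw [List.find?_cons_of_pos (l := _) (by simpa using hB)] at hf
      have : h = x := by injection hf
      subst this
      rw [List.find?_cons_of_pos (l := _) (by simpa using hx)]
    · have hA : h ∉ A := fun hh => hB (hAB hh)
      rw [List.find?_cons_of_neg (l := _) (by simpa using hB)] at hf
      rw [List.find?_cons_of_neg (l := _) (by simpa using hA)]
      exact ih hf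

/-- If an agent takes `x` from the menu `insert x F`, then after also making `j`
available it takes either `x` or `j`. -/
lemma MenuSel.find?_split {F : Finset G} {x j : G} :
    ∀ l : List G, l.find? (fun a => decide (a ∈ insert x F)) = some x →
      l.find? (fun a => decide (a ∈ insert x (insert j F))) = some x ∨
      l.find? (fun a => decide (a ∈ insert j F)) = some j := by
  intro l
  induction l with
  | nil => simp
  | cons h tl ih =>
    intro hf
    by_cases h1 : h ∈ insert x F
    · rw [List.find?_cons_of_pos (l := _) (by simpa using h1)] at hf
      have : h = x := by injection hf
      subst this
      left
      rw [List.find?_cons_of_pos (l := _) (by simp)]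
    · have hx' : h ≠ x := fun e => h1 (e ▸ mem_insert_self x F)
      have hF : h ∉ F := fun e => h1 (mem_insert_of_mem e)
      rw [List.find?_cons_of_neg (l := _) (by simpa using h1)] at hf
      by_cases h2 : h = j
      · right
        subst h2
        rw [List.find?_cons_of_pos (l := _) (by simp)]
      · have hA : h ∉ insert x (insert j F) := by simp [hx', h2, hF]
        have hBn : h ∉ insert j F := by simp [h2, hF]
        rcases ih hf with hc | hc
        · left; rw [List.find?_cons_of_neg (l := _) (by simpa using hA)]; exact hc
        · right; rw [List.find?_cons_of_neg (l := _) (by simpa using hBn)]; exact hc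

variable {N : Type} [Fintype N]

/-- Shrinking a menu (around a good `x` kept in it) can only increase the
number of agents assigned to `x`. -/
lemma MenuSel.count_mono (P : MenuProblem N G) {M M' : Finset G} (hMM : M ⊆ M') {x : G}
    (hx : x ∈ M) : P.assignedCount M' x ≤ P.assignedCount M x := by
  apply Finset.card_le_card
  rw [Finset.subset_iff]
  intro i hi
  rw [Finset.mem_filter] at hi ⊢
  simp only [Finset.mem_filter, MenuProblem.assigned, MenuProblem.assignedCount] at *
  exact ⟨hi.1, MenuSel.find?_mono hMM hx _ hi.2⟩

/-- Lobbies only get smaller as the menu grows. -/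
lemma MenuSel.lobby_mono (P : MenuProblem N G) {M M' : Finset G} (h : M ⊆ M') (x : G) :
    P.lobby M' x ≤ P.lobby M x :=
  MenuSel.count_mono P (insert_subset_insert x h) (mem_insert_self x M)

/-- Splitting a lobby along an additional good `j`. -/
lemma MenuSel.lobby_split (P : MenuProblem N G) (F : Finset G) (x j : G) :
    P.lobby F x ≤ P.lobby (insert j F) x + P.lobby F j := by
  classical
  unfold MenuProblem.lobby MenuProblem.assignedCount
  refine le_trans (Finset.card_le_card (Finset.subset_iff.mpr fun i hi => ?_)) (Finset.card_union_le _ _)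
  rw [Finset.mem_filter] at hi
  rw [Finset.mem_union, Finset.mem_filter, Finset.mem_filter]
  simp only [Finset.mem_filter, Finset.mem_union, MenuProblem.assigned] at *
  rcases MenuSel.find?_split _ hi.2 with hc | hc
  · exact Or.inl ⟨hi.1, hc⟩
  · exact Or.inr ⟨hi.1, hc⟩

/-- The main reduction process: starting from any menu `M` all of whose goods are
ranked by at least `t` agents, iteratively removing deficient goods yields a
`t`-feasible submenu `F` together with sharp lobby bounds: every removed good has
lobby at most `(|M| - |F|)(t-1)`, and all of them except possibly one (the first
removed) have lobby at most `(|M| - |F| - 1)(t-1)`. -/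
lemma MenuSel.exists_reduction (P : MenuProblem N G) (t : ℕ) (d : G) :
    ∀ (k : ℕ) (M : Finset G), M.card ≤ k → (∀ y ∈ M, t ≤ P.lobby ∅ y) →
    ∃ F : Finset G, F ⊆ M ∧ (M.Nonempty → F.Nonempty) ∧ P.TFeasible F t ∧
      ∃ xh : G,
        (∀ x ∈ M, x ∉ F → P.lobby F x ≤ (M.card - F.card) * (t - 1) ∧
          (x ≠ xh → P.lobby F x ≤ (M.card - F.card - 1) * (t - 1))) ∧
        (∀ x ∉ M, P.lobby F x ≤ P.lobby M x + (M.card - F.card) * (t - 1)) := by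
  intro k
  induction k with
  | zero =>
    intro M hM hR
    have hMe : M = ∅ := Finset.card_eq_zero.mp (Nat.le_zero.mp hM)
    subst hMe
    refine ⟨∅, subset_rfl, fun h => h, fun j hj => absurd hj (Finset.notMem_empty j), d, ?_, ?_⟩
    · intro x hx; exact absurd hx (Finset.notMem_empty x)
    · intro x _; simp
  | succ k ih =>
    intro M hM hR
    by_cases hfeas : ∀ x ∈ M, t ≤ P.assignedCount M x
    · refine ⟨M, subset_rfl, fun h => h, hfeas, d, ?_, ?_⟩
      · intro x hx hx'; exact absurd hx hx'
      · intro x _; simp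
    · push_neg at hfeas
      obtain ⟨x₀, hx₀M, hx₀⟩ := hfeas
      set M' := M.erase x₀ with hM'def
      have hM'card : M'.card = M.card - 1 := Finset.card_erase_of_mem hx₀M
      have hMpos : 0 < M.card := Finset.card_pos.mpr ⟨x₀, hx₀M⟩
      have hM'le : M'.card ≤ k := by omega
      have hR' : ∀ y ∈ M', t ≤ P.lobby ∅ y := fun y hy => hR y (Finset.mem_of_mem_erase hy)
      obtain ⟨F, hFM', hne', hfeasF, xh', hIn', hOut'⟩ := ih M' hM'le hR'
      have hFM : F ⊆ M := hFM'.trans (Finset.erase_subset _ _)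
      have hFcard : F.card ≤ M'.card := Finset.card_le_card hFM'
      have hmm : M.card - F.card = (M'.card - F.card) + 1 := by omega
      have hcM : P.assignedCount M x₀ ≤ t - 1 := by omega
      have hins : insert x₀ M' = M := Finset.insert_erase hx₀M
      have hlM' : P.lobby M' x₀ = P.assignedCount M x₀ := by
        rw [MenuProblem.lobby, hins]
      refine ⟨F, hFM, ?_, hfeasF, x₀, ?_, ?_⟩
      · intro hMne
        apply hne'
        rcases Finset.eq_empty_or_nonempty M' with he | hne
        · exfalso
          have hMsing : M = {x₀} := by
            apply Finset.eq_singleton_iff_unique_mem.mpr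
            refine ⟨hx₀M, fun y hy => ?_⟩
            by_contra hyx
            have : y ∈ M' := Finset.mem_erase.mpr ⟨hyx, hy⟩
            rw [he] at this; exact absurd this (Finset.notMem_empty y)
          have h1 : t ≤ P.lobby ∅ x₀ := hR x₀ hx₀M
          have h2 : P.lobby ∅ x₀ = P.assignedCount {x₀} x₀ := by
            simp [MenuProblem.lobby]
          rw [hMsing] at hx₀
          omega
        · exact hne
      · intro x hxM hxF
        by_cases hxx : x = x₀
        · subst hxx
          have hxM' : x ∉ M' := Finset.notMem_erase x M
          have hb := hOut' x hxM'
          rw [hlM'] at hb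
          constructor
          · rw [hmm, Nat.succ_mul]
            linarith
          · intro hne; exact absurd rfl hne
        · have hxM'' : x ∈ M' := Finset.mem_erase.mpr ⟨hxx, hxM⟩
          have hb := (hIn' x hxM'' hxF).1
          constructor
          · calc P.lobby F x ≤ (M'.card - F.card) * (t-1) := hb
              _ ≤ (M.card - F.card) * (t-1) := Nat.mul_le_mul_right _ (by omega)
          · intro _
            calc P.lobby F x ≤ (M'.card - F.card) * (t-1) := hb
              _ ≤ (M.card - F.card - 1) * (t-1) := Nat.mul_le_mul_right _ (by omega)
      · intro x hxM
        have hxM' : x ∉ M' := fun hc => hxM (Finset.mem_of_mem_erase hc)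
        have h1 := hOut' x hxM'
        have h2 : P.lobby M' x ≤ P.lobby M x + (t-1) := by
          have hs := MenuSel.lobby_split P M' x x₀
          rw [hins, hlM'] at hs
          linarith
        rw [hmm, Nat.succ_mul]
        linarith

/-- The reduction process protected at a good `p`: deficient goods other than `p`
are removed. The result contains `p`, all its other goods get at least `t` agents,
and the removed goods have lobby at most `(|M| - |F|)(t-1)`. -/
lemma MenuSel.exists_reduction_protected (P : MenuProblem N G) (t : ℕ) (p : G) :
    ∀ (k : ℕ) (M : Finset G), M.card ≤ k → p ∈ M → (∀ y ∈ M, t ≤ P.lobby ∅ y) →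
    ∃ F : Finset G, F ⊆ M ∧ p ∈ F ∧ (∀ x ∈ F, x ≠ p → t ≤ P.assignedCount F x) ∧
      (∀ x ∈ M, x ∉ F → P.lobby F x ≤ (M.card - F.card) * (t - 1)) ∧
      (∀ x ∉ M, P.lobby F x ≤ P.lobby M x + (M.card - F.card) * (t - 1)) := by
  intro k
  induction k with
  | zero =>
    intro M hM hp _
    exfalso
    have := Finset.card_pos.mpr ⟨p, hp⟩
    omega
  | succ k ih =>
    intro M hM hp hR
    by_cases hfeas : ∀ x ∈ M, x ≠ p → t ≤ P.assignedCount M x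
    · refine ⟨M, subset_rfl, hp, hfeas, ?_, ?_⟩
      · intro x hx hx'; exact absurd hx hx'
      · intro x _; simp
    · push_neg at hfeas
      obtain ⟨x₀, hx₀M, hx₀p, hx₀⟩ := hfeas
      set M' := M.erase x₀ with hM'def
      have hpM' : p ∈ M' := Finset.mem_erase.mpr ⟨fun e => hx₀p e.symm, hp⟩
      have hM'card : M'.card = M.card - 1 := Finset.card_erase_of_mem hx₀M
      have hMpos : 0 < M.card := Finset.card_pos.mpr ⟨x₀, hx₀M⟩
      have hM'le : M'.card ≤ k := by omega
      obtain ⟨F, hFM', hpF, hfeasF, hIn', hOut'⟩ :=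
        ih M' hM'le hpM' (fun y hy => hR y (Finset.mem_of_mem_erase hy))
      have hFM : F ⊆ M := hFM'.trans (Finset.erase_subset _ _)
      have hFcard : F.card ≤ M'.card := Finset.card_le_card hFM'
      have hmm : M.card - F.card = (M'.card - F.card) + 1 := by omega
      have hcM : P.assignedCount M x₀ ≤ t - 1 := by omega
      have hins : insert x₀ M' = M := Finset.insert_erase hx₀M
      have hlM' : P.lobby M' x₀ = P.assignedCount M x₀ := by
        rw [MenuProblem.lobby, hins]
      refine ⟨F, hFM, hpF, hfeasF, ?_, ?_⟩
      · intro x hxM hxF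
        by_cases hxx : x = x₀
        · subst hxx
          have hb := hOut' x (Finset.notMem_erase x M)
          rw [hlM'] at hb
          rw [hmm, Nat.succ_mul]
          linarith
        · have hb := hIn' x (Finset.mem_erase.mpr ⟨hxx, hxM⟩) hxF
          calc P.lobby F x ≤ (M'.card - F.card) * (t-1) := hb
            _ ≤ (M.card - F.card) * (t-1) := Nat.mul_le_mul_right _ (by omega)
      · intro x hxM
        have h1 := hOut' x (fun hc => hxM (Finset.mem_of_mem_erase hc))
        have h2 : P.lobby M' x ≤ P.lobby M x + (t-1) := by
          have hs := MenuSel.lobby_split P M' x x₀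
          rw [hins, hlM'] at hs
          linarith
        rw [hmm, Nat.succ_mul]
        linarith

end Auxiliary

/-- For every `g ≥ 4` and `t, u ∈ ℕ` with `u − 1 ≥ (g − 2)(t − 1)`, every menu selection
problem with `g` public goods has a `(t,u)`-stable menu. -/
theorem upper_bound_g_minus_two (g t u : ℕ) (hg : 4 ≤ g) (hu : 1 ≤ u)
    (h : (g - 2) * (t - 1) ≤ u - 1) (n : ℕ) (P : MenuProblem (Fin n) (Fin g)) :
    ∃ O : Finset (Fin g), P.Stable O t u := by
  classical
  have d : Fin g := ⟨0, by omega⟩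
  have hu2 : (g - 2) * (t - 1) < u := lt_of_le_of_lt h (Nat.sub_lt hu Nat.one_pos)
  have hg2 : 2 ≤ g - 2 := by omega
  have h2t : 2 * (t - 1) < u := lt_of_le_of_lt (Nat.mul_le_mul_right _ hg2) hu2
  have htu : t ≤ u := by omega
  set U₀ := Finset.univ.filter (fun y : Fin g => t ≤ P.lobby ∅ y) with hU₀def
  have hRU : ∀ y ∈ U₀, t ≤ P.lobby ∅ y := fun y hy => (Finset.mem_filter.mp hy).2
  obtain ⟨F, hFU, hne, hfeasF, xh, hIn, hOut⟩ :=
    MenuSel.exists_reduction P t d U₀.card U₀ le_rfl hRU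
  by_cases hunc : P.UUncontestable F u
  · exact ⟨F, hfeasF, hunc⟩
  rw [MenuProblem.UUncontestable] at hunc
  push_neg at hunc
  obtain ⟨j, hjF, hju⟩ := hunc
  have hjU : j ∈ U₀ := by
    by_contra hjU
    have h1 : P.lobby F j ≤ P.lobby ∅ j := MenuSel.lobby_mono P (Finset.empty_subset F) j
    have h2 : P.lobby ∅ j < t := by
      by_contra hc; push_neg at hc
      exact hjU (Finset.mem_filter.mpr ⟨Finset.mem_univ j, hc⟩)
    omega
  have hFne : F.Nonempty := hne ⟨j, hjU⟩
  have hFc1 : 1 ≤ F.card := Finset.card_pos.mpr hFne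
  have hU₀g : U₀.card ≤ g := by
    have := Finset.card_le_univ U₀
    simpa using this
  have hjb := (hIn j hjU hjF).1
  have hFcU : F.card ≤ U₀.card := Finset.card_le_card hFU
  -- the contester forces the extremal situation
  have hm : g - 1 ≤ U₀.card - F.card := by
    by_contra hc
    push_neg at hc
    have h3 : (U₀.card - F.card) * (t - 1) ≤ (g - 2) * (t - 1) :=
      Nat.mul_le_mul_right _ (by omega)
    linarith
  have hU₀card : U₀.card = g := by omega
  have hFcard : F.card = 1 := by omega
  have hmval : U₀.card - F.card = g - 1 := by omega
  have hU₀univ : U₀ = Finset.univ := by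
    apply Finset.eq_univ_of_card
    simp [hU₀card]
  have hR : ∀ y : Fin g, t ≤ P.lobby ∅ y :=
    fun y => hRU y (by rw [hU₀univ]; exact Finset.mem_univ y)
  obtain ⟨a, hFa⟩ := Finset.card_eq_one.mp hFcard
  subst hFa
  have haj : a ≠ j := by
    rintro rfl
    exact hjF (Finset.mem_singleton_self a)
  have hjxh : j = xh := by
    by_contra hc
    have h5 := (hIn j hjU hjF).2 hc
    rw [hmval] at h5
    have h4 : (g - 1 - 1) * (t - 1) ≤ (g - 2) * (t - 1) :=
      Nat.mul_le_mul_right _ (by omega)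
    linarith
  have hsmall : ∀ x : Fin g, x ≠ a → x ≠ j → P.lobby {a} x < u := by
    intro x hxa hxj
    have hxU : x ∈ U₀ := by rw [hU₀univ]; exact Finset.mem_univ x
    have hxF : x ∉ ({a} : Finset (Fin g)) := by simpa using hxa
    have h5 := (hIn x hxU hxF).2 (by rw [← hjxh]; exact hxj)
    rw [hmval] at h5
    have h4 : (g - 1 - 1) * (t - 1) ≤ (g - 2) * (t - 1) :=
      Nat.mul_le_mul_right _ (by omega)
    linarith
  by_cases hA : t ≤ P.assignedCount (insert j {a}) a
  · -- the pair {a, j} is stable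
    refine ⟨insert j {a}, ?_, ?_⟩
    · intro x hx
      rcases Finset.mem_insert.mp hx with rfl | hx'
      · show t ≤ P.assignedCount (insert x {a}) x
        exact le_trans htu hju
      · have hxa : x = a := Finset.mem_singleton.mp hx'
        subst hxa
        exact hA
    · intro x hx
      simp only [Finset.mem_insert, Finset.mem_singleton, not_or] at hx
      have h1 : P.lobby (insert j {a}) x ≤ P.lobby {a} x :=
        MenuSel.lobby_mono P (Finset.subset_insert j {a}) x
      exact lt_of_le_of_lt h1 (hsmall x hx.2 hx.1)
  · push_neg at hA
    -- fewer than t agents prefer a over j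
    have hpair : P.lobby {j} a < t := by
      rw [MenuProblem.lobby]
      have he : insert a ({j} : Finset (Fin g)) = insert j {a} := by
        ext y; simp [or_comm]
      rw [he]
      exact hA
    -- second run: on univ \ {a}, protecting j
    set M₂ := (Finset.univ : Finset (Fin g)).erase a with hM₂def
    have hjM₂ : j ∈ M₂ := Finset.mem_erase.mpr ⟨fun e => haj e.symm, Finset.mem_univ j⟩
    have hM₂card : M₂.card = g - 1 := by
      rw [Finset.card_erase_of_mem (Finset.mem_univ a)]
      simp
    obtain ⟨F₂, hF₂M, hpF₂, hfeas₂, hIn₂, hOut₂⟩ :=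
      MenuSel.exists_reduction_protected P t j M₂.card M₂ le_rfl hjM₂ (fun y _ => hR y)
    have haF₂ : a ∉ F₂ := fun hc => (Finset.notMem_erase a Finset.univ) (hF₂M hc)
    have hF₂c1 : 1 ≤ F₂.card := Finset.card_pos.mpr ⟨j, hpF₂⟩
    have hF₂cM : F₂.card ≤ M₂.card := Finset.card_le_card hF₂M
    have hjsub : ({j} : Finset (Fin g)) ⊆ F₂ := Finset.singleton_subset_iff.mpr hpF₂
    have hlF₂a : P.lobby F₂ a ≤ t - 1 := by
      have := MenuSel.lobby_mono P hjsub a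
      omega
    by_cases hBj : t ≤ P.assignedCount F₂ j
    · -- F₂ itself is stable
      refine ⟨F₂, ?_, ?_⟩
      · intro x hx
        by_cases hxj : x = j
        · subst hxj; exact hBj
        · exact hfeas₂ x hx hxj
      · intro x hx
        by_cases hxa : x = a
        · subst hxa
          omega
        · have hxM₂ : x ∈ M₂ := Finset.mem_erase.mpr ⟨hxa, Finset.mem_univ x⟩
          have hb := hIn₂ x hxM₂ hx
          have h5 : (M₂.card - F₂.card) * (t - 1) ≤ (g - 2) * (t - 1) :=
            Nat.mul_le_mul_right _ (by omega)
          linarith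
    · push_neg at hBj
      -- j itself is deficient in F₂; drop it
      have hF₂ne : F₂ ≠ {j} := by
        intro he
        have h1 : P.lobby ∅ j = P.assignedCount {j} j := by
          simp [MenuProblem.lobby]
        have h2 := hR j
        rw [he] at hBj
        omega
      have hF₂c2 : 2 ≤ F₂.card := by
        by_contra hc
        push_neg at hc
        have h1 : F₂.card = 1 := by omega
        obtain ⟨b, hb⟩ := Finset.card_eq_one.mp h1
        apply hF₂ne
        rw [hb]
        rw [hb] at hpF₂
        rw [Finset.mem_singleton.mp hpF₂]
      set O := F₂.erase j with hOdef
      have hinsO : insert j O = F₂ := Finset.insert_erase hpF₂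
      have hlobOj : P.lobby O j = P.assignedCount F₂ j := by
        rw [MenuProblem.lobby, hinsO]
      refine ⟨O, ?_, ?_⟩
      · intro x hx
        have hxF₂ : x ∈ F₂ := Finset.mem_of_mem_erase hx
        have hxj : x ≠ j := (Finset.mem_erase.mp hx).1
        calc t ≤ P.assignedCount F₂ x := hfeas₂ x hxF₂ hxj
          _ ≤ P.assignedCount O x := MenuSel.count_mono P (Finset.erase_subset _ _) hx
      · intro x hx
        by_cases hxj : x = j
        · subst hxj
          omega
        · have hsplit := MenuSel.lobby_split P O x j
          rw [hinsO, hlobOj] at hsplit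
          by_cases hxa : x = a
          · subst hxa
            omega
          · have hxF₂ : x ∉ F₂ := fun hc => hx (Finset.mem_erase.mpr ⟨hxj, hc⟩)
            have hxM₂ : x ∈ M₂ := Finset.mem_erase.mpr ⟨hxa, Finset.mem_univ x⟩
            have hb := hIn₂ x hxM₂ hxF₂
            have h6 : (M₂.card - F₂.card + 1) * (t - 1) ≤ (g - 2) * (t - 1) :=
              Nat.mul_le_mul_right _ (by omega)
            rw [Nat.succ_mul] at h6
            have hBj' : P.assignedCount F₂ j ≤ t - 1 := by omega
            linarith
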